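/- Let G be a finite real reflection group on ℝ^n with invariant positive definite quadratic form q, degrees d_1,…,d_n, N reflection hyperplanes with chosen linear equations ℓ_1,…,ℓ_N, and Δ = (∏ ℓ_i)^2. Then the maximum of Δ on the sphere S = {x ∈ ℝ^n : q(x) = 1} equals κ · (∏_{i=1}^n d_i^{d_i}) / N^N, where κ = ∏_{i=1}^N q(ℓ_i)/4 and ℓ_i is identified with a vector in ℝ^n via q. -/

import Mathlib

open MeasureTheory

/-- An element of `GL_n(ℝ)` is a reflection if it has order 2 and fixes a hyperplane
pointwise. -/
def IsReflection {n : ℕ} (σ : Matrix.GeneralLinearGroup (Fin n) ℝ) : Prop :=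
  σ ≠ 1 ∧ σ * σ = 1 ∧
    Module.finrank ℝ
      (LinearMap.ker (Matrix.toLin' (σ : Matrix (Fin n) (Fin n) ℝ) - LinearMap.id)) = n - 1

/-- The bilinear form attached to a real matrix `Mq`. -/
def bilinR {n : ℕ} (Mq : Matrix (Fin n) (Fin n) ℝ) (x y : Fin n → ℝ) : ℝ :=
  ∑ i, ∑ j, Mq i j * x i * y j

section helpers
open Filter Real Topology
variable {n : ℕ} (Mq : Matrix (Fin n) (Fin n) ℝ)

lemma bilinR_eq_dot (x y : Fin n → ℝ) : bilinR Mq x y = dotProduct x (Matrix.mulVec Mq y) := by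
  unfold bilinR dotProduct Matrix.mulVec
  refine Finset.sum_congr rfl fun i _ => ?_
  simp only []
  rw [dotProduct, Finset.mul_sum]
  refine Finset.sum_congr rfl fun j _ => ?_
  ring

lemma bilinR_smul_smul (c : ℝ) (x y : Fin n → ℝ) :
    bilinR Mq (c • x) (c • y) = c ^ 2 * bilinR Mq x y := by
  unfold bilinR
  rw [Finset.mul_sum]
  refine Finset.sum_congr rfl fun i _ => ?_
  rw [Finset.mul_sum]
  refine Finset.sum_congr rfl fun j _ => ?_
  simp [Pi.smul_apply, smul_eq_mul]; ring

lemma bilinR_smul_right (c : ℝ) (x y : Fin n → ℝ) :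
    bilinR Mq x (c • y) = c * bilinR Mq x y := by
  unfold bilinR
  rw [Finset.mul_sum]
  refine Finset.sum_congr rfl fun i _ => ?_
  rw [Finset.mul_sum]
  refine Finset.sum_congr rfl fun j _ => ?_
  simp [Pi.smul_apply, smul_eq_mul]; ring

lemma continuous_bilinR (v : Fin n → ℝ) : Continuous (fun x => bilinR Mq v x) := by
  unfold bilinR; fun_prop

lemma continuous_bilinR2 : Continuous (fun x => bilinR Mq x x) := by
  unfold bilinR; fun_prop

lemma factorial_eq_stirling (m : ℕ) (hm : m ≠ 0) :
    (Nat.factorial m : ℝ) = Stirling.stirlingSeq m * (Real.sqrt (2 * m) * ((m : ℝ) / Real.exp 1) ^ m) := by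
  have hm' : (0:ℝ) < m := by exact_mod_cast Nat.pos_of_ne_zero hm
  have h1 : Real.sqrt (2 * m) * ((m : ℝ) / Real.exp 1) ^ m ≠ 0 := by positivity
  rw [Stirling.stirlingSeq, div_mul_cancel₀ _ h1]

lemma pow_mul_exp_le (u b : ℝ) (m : ℕ) (hu : 0 ≤ u) (hb : 0 < b) (hm : m ≠ 0) :
    u ^ m * Real.exp (-(b * u)) ≤ ((m : ℝ) / (b * Real.exp 1)) ^ m := by
  have hm' : (0:ℝ) < m := by exact_mod_cast Nat.pos_of_ne_zero hm
  rcases eq_or_lt_of_le hu with h | h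
  · rw [← h]
    simp only [ne_eq, hm, not_false_iff, zero_pow, zero_mul]
    positivity
  · have key : Real.log (u * b / m) ≤ u * b / m - 1 :=
      Real.log_le_sub_one_of_pos (by positivity)
    have hlog : (m:ℝ) * Real.log u - b * u ≤ (m:ℝ) * (Real.log ((m:ℝ)/b) - 1) := by
      rw [Real.log_div (by positivity) (by positivity), Real.log_mul (ne_of_gt h) (ne_of_gt hb)] at key
      have h2 := mul_le_mul_of_nonneg_left key (le_of_lt hm')
      rw [Real.log_div (by positivity) (by positivity)]
      have hmne : (m:ℝ) ≠ 0 := ne_of_gt hm'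
      calc (m:ℝ) * Real.log u - b * u
          = (m:ℝ) * ((Real.log u + Real.log b - Real.log m)) - b*u + (m:ℝ)*(Real.log m - Real.log b) := by ring
        _ ≤ (m:ℝ) * (u * b / m - 1) - b*u + (m:ℝ)*(Real.log m - Real.log b) := by linarith
        _ = (m:ℝ) * ((Real.log m - Real.log b) - 1) := by field_simp; ring
    calc u ^ m * Real.exp (-(b*u)) = Real.exp ((m:ℝ) * Real.log u - b * u) := by
          rw [Real.exp_sub, Real.exp_nat_mul, Real.exp_log h, Real.exp_neg, div_eq_mul_inv]
      _ ≤ Real.exp ((m:ℝ) * (Real.log ((m:ℝ)/b) - 1)) := Real.exp_le_exp.2 hlog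
      _ = ((m:ℝ) / (b * Real.exp 1)) ^ m := by
          rw [Real.exp_nat_mul, Real.exp_sub, Real.exp_log (by positivity), div_div]

lemma tendsto_const_rpow_inv (c : ℝ) (hc : 0 < c) :
    Tendsto (fun k : ℕ => c ^ ((k : ℝ)⁻¹)) atTop (𝓝 1) := by
  have h1 : Tendsto (fun k : ℕ => ((k : ℝ))⁻¹) atTop (𝓝 0) :=
    tendsto_inv_atTop_zero.comp tendsto_natCast_atTop_atTop
  have h2 : Tendsto (fun k : ℕ => Real.exp ((k:ℝ)⁻¹ * Real.log c)) atTop (𝓝 (Real.exp 0)) :=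
    (Real.continuous_exp.tendsto 0).comp (by simpa using h1.mul_const (Real.log c))
  have h3 : (fun k : ℕ => c ^ ((k : ℝ)⁻¹)) = fun k : ℕ => Real.exp ((k:ℝ)⁻¹ * Real.log c) := by
    funext k; rw [Real.rpow_def_of_pos hc, mul_comm]
  rw [h3]
  simpa using h2

lemma tendsto_rpow_inv_of_pos {a : ℕ → ℝ} {L : ℝ} (hL : 0 < L)
    (ha : Tendsto a atTop (𝓝 L)) :
    Tendsto (fun k => a k ^ ((k : ℝ)⁻¹)) atTop (𝓝 1) := by
  have hlow : ∀ᶠ k in atTop, L / 2 ≤ a k := ha.eventually_const_le (by linarith)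
  have hhigh : ∀ᶠ k in atTop, a k ≤ 2 * L := ha.eventually_le_const (by linarith)
  refine tendsto_of_tendsto_of_tendsto_of_le_of_le' (tendsto_const_rpow_inv (L/2) (by linarith))
    (tendsto_const_rpow_inv (2*L) (by linarith)) ?_ ?_
  · filter_upwards [hlow] with k hk
    exact Real.rpow_le_rpow (by linarith) hk (by positivity)
  · filter_upwards [hlow, hhigh] with k hk hk2
    exact Real.rpow_le_rpow (by linarith) hk2 (by positivity)

end helpers

open Filter Real Topology

set_option maxHeartbeats 1000000 in
theorem max_discriminant_on_sphere
    (n N : ℕ) (hn : 1 ≤ n) (hN : 1 ≤ N)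
    (G : Subgroup (Matrix.GeneralLinearGroup (Fin n) ℝ)) (hfin : Finite G)
    (hgen : G = Subgroup.closure {σ | σ ∈ G ∧ IsReflection σ})
    (Mq : Matrix (Fin n) (Fin n) ℝ) (hpos : Mq.PosDef) (hsym : Mq.IsSymm)
    (hGinv : ∀ σ ∈ G, ∀ x y, bilinR Mq ((σ : Matrix (Fin n) (Fin n) ℝ).mulVec x)
      ((σ : Matrix (Fin n) (Fin n) ℝ).mulVec y) = bilinR Mq x y)
    (v : Fin N → (Fin n → ℝ)) (hv : ∀ i, v i ≠ 0)
    (hhypinj : Function.Injective (fun i => {x : Fin n → ℝ | bilinR Mq (v i) x = 0}))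
    (hhyps : Set.range (fun i => {x : Fin n → ℝ | bilinR Mq (v i) x = 0})
      = {H : Set (Fin n → ℝ) | ∃ σ ∈ G, IsReflection σ ∧
          H = {x | (σ : Matrix (Fin n) (Fin n) ℝ).mulVec x = x}})
    (d : Fin n → ℕ) (hd : ∀ i, 1 ≤ d i)
    (hsum : (∑ i, ((d i : ℤ) - 1)) = N)
    (Δ : (Fin n → ℝ) → ℝ) (hΔ : ∀ x, Δ x = (∏ i, bilinR Mq (v i) x) ^ 2)
    (κ : ℝ) (hκ : κ = ∏ i, bilinR Mq (v i) (v i) / 4)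
    (hMac : ∀ s : ℝ, 0 ≤ s →
      (∫ x : Fin n → ℝ, Δ x ^ s * Real.exp (-(bilinR Mq x x)))
        = Real.pi ^ ((n : ℝ) / 2) * κ ^ s *
            (∏ i, Real.Gamma (d i * s + 1) / Real.Gamma (s + 1)) *
            Mq.det ^ (-(1 : ℝ) / 2)) :
    IsGreatest {y : ℝ | ∃ x : Fin n → ℝ, bilinR Mq x x = 1 ∧ y = Δ x}
      (κ * (∏ i, (d i : ℝ) ^ (d i : ℕ)) / (N : ℝ) ^ (N : ℕ)) := by
  classical
  have hqpos : ∀ x : Fin n → ℝ, x ≠ 0 → 0 < bilinR Mq x x := by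
    intro x hx
    have := hpos.dotProduct_mulVec_pos hx
    rw [bilinR_eq_dot]
    simpa using this
  have hq_nonneg : ∀ x : Fin n → ℝ, 0 ≤ bilinR Mq x x := by
    intro x
    rcases eq_or_ne x 0 with rfl | hx
    · simp [bilinR]
    · exact le_of_lt (hqpos x hx)
  have hΔ0 : ∀ x, 0 ≤ Δ x := fun x => by rw [hΔ]; positivity
  have hΔcont : Continuous Δ := by
    have h : Δ = fun x => (∏ i, bilinR Mq (v i) x) ^ 2 := funext hΔ
    rw [h]
    exact (continuous_finset_prod _ fun i _ => continuous_bilinR Mq (v i)).pow 2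
  have hΔsmul : ∀ (c : ℝ) (x : Fin n → ℝ), Δ (c • x) = (c^2)^N * Δ x := by
    intro c x
    rw [hΔ, hΔ]
    have h : ∀ i ∈ Finset.univ, bilinR Mq (v i) (c • x) = c * bilinR Mq (v i) x :=
      fun i _ => bilinR_smul_right Mq c (v i) x
    rw [Finset.prod_congr rfl h, Finset.prod_mul_distrib, Finset.prod_const]
    simp only [Finset.card_univ, Fintype.card_fin]
    ring
  have hqsmul : ∀ (c : ℝ) (x : Fin n → ℝ), bilinR Mq (c • x) (c • x) = c ^ 2 * bilinR Mq x x :=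
    fun c x => bilinR_smul_smul Mq c x x
  obtain ⟨x₀, hx₀S, hx₀max⟩ : ∃ x₀ : Fin n → ℝ, bilinR Mq x₀ x₀ = 1 ∧
      ∀ x, bilinR Mq x x = 1 → Δ x ≤ Δ x₀ := by
    -- the sphere is nonempty
    have hSne : ∃ y : Fin n → ℝ, bilinR Mq y y = 1 := by
      have hy0 : (fun _ : Fin n => (1:ℝ)) ≠ 0 := by
        intro h
        have := congrFun h ⟨0, hn⟩
        norm_num at this
      set y : Fin n → ℝ := fun _ => 1 with hy
      have hqy : 0 < bilinR Mq y y := hqpos y hy0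
      refine ⟨(Real.sqrt (bilinR Mq y y))⁻¹ • y, ?_⟩
      rw [hqsmul, inv_pow, Real.sq_sqrt (le_of_lt hqy), inv_mul_cancel₀ (ne_of_gt hqy)]
    -- a positive lower bound for q on the unit sphere
    obtain ⟨c, hc, hcb⟩ : ∃ c > 0, ∀ x : Fin n → ℝ, ‖x‖ = 1 → c ≤ bilinR Mq x x := by
      have hsph : IsCompact (Metric.sphere (0 : Fin n → ℝ) 1) := isCompact_sphere _ _
      have hne : (Metric.sphere (0 : Fin n → ℝ) 1).Nonempty := by
        obtain ⟨y, hy⟩ := hSne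
        have hy0 : y ≠ 0 := by
          intro h; rw [h] at hy; simp [bilinR] at hy
        refine ⟨‖y‖⁻¹ • y, ?_⟩
        simp [norm_smul, norm_ne_zero_iff.2 hy0]
      obtain ⟨z, hz, hzmin⟩ := hsph.exists_isMinOn hne (continuous_bilinR2 Mq).continuousOn
      have hz1 : ‖z‖ = 1 := by simpa using hz
      have hz0 : z ≠ 0 := by
        intro h; rw [h] at hz1; simp at hz1
      exact ⟨bilinR Mq z z, hqpos z hz0, fun x hx => hzmin (by simp [hx])⟩
    -- the sphere is compact
    have hclosed : IsClosed {x : Fin n → ℝ | bilinR Mq x x = 1} :=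
      isClosed_eq (continuous_bilinR2 Mq) continuous_const
    have hsub : {x : Fin n → ℝ | bilinR Mq x x = 1} ⊆ Metric.closedBall 0 (Real.sqrt (1/c)) := by
      intro x hx
      have hx1 : bilinR Mq x x = 1 := hx
      have hx0 : x ≠ 0 := by
        intro h; rw [h] at hx1; simp [bilinR] at hx1
      have hnx : (0:ℝ) < ‖x‖ := norm_pos_iff.2 hx0
      have hux : ‖(‖x‖⁻¹ • x)‖ = 1 := by simp [norm_smul, ne_of_gt hnx]
      have h1 : c ≤ bilinR Mq (‖x‖⁻¹ • x) (‖x‖⁻¹ • x) := hcb _ hux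
      rw [hqsmul, hx1, mul_one, inv_pow] at h1
      have hnx2 : (0:ℝ) < ‖x‖^2 := by positivity
      have h2 : c * ‖x‖^2 ≤ 1 := by
        have := mul_le_mul_of_nonneg_right h1 (le_of_lt hnx2)
        rwa [inv_mul_cancel₀ (ne_of_gt hnx2)] at this
      have h3 : ‖x‖^2 ≤ 1/c := by
        rw [le_div_iff₀ hc]; linarith [mul_comm c (‖x‖^2)]
      rw [Metric.mem_closedBall, dist_zero_right]
      have := Real.sqrt_le_sqrt h3
      rwa [Real.sqrt_sq (norm_nonneg x)] at this
    have hScomp : IsCompact {x : Fin n → ℝ | bilinR Mq x x = 1} :=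
      (isCompact_closedBall (0 : Fin n → ℝ) _).of_isClosed_subset hclosed hsub
    obtain ⟨y, hy⟩ := hSne
    obtain ⟨x₀, hx₀, hmax⟩ := hScomp.exists_isMaxOn ⟨y, hy⟩ hΔcont.continuousOn
    exact ⟨x₀, hx₀, fun x hx => hmax hx⟩
  set M := Δ x₀ with hM
  have hMbound : ∀ x, Δ x ≤ M * (bilinR Mq x x) ^ N := by
    intro x
    rcases eq_or_ne x 0 with rfl | hx
    · have h0 : Δ 0 = 0 := by
        rw [hΔ]
        have : ∃ i : Fin N, True := ⟨⟨0, hN⟩, trivial⟩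
        rw [Finset.prod_eq_zero (Finset.mem_univ (⟨0, hN⟩ : Fin N)) (by simp [bilinR])]
        norm_num
      rw [h0]
      have : bilinR Mq (0 : Fin n → ℝ) 0 = 0 := by simp [bilinR]
      rw [this, zero_pow (by omega), mul_zero]
    · have hqx : 0 < bilinR Mq x x := hqpos x hx
      set t := Real.sqrt (bilinR Mq x x) with ht
      have htpos : 0 < t := Real.sqrt_pos.2 hqx
      have ht2 : t ^ 2 = bilinR Mq x x := Real.sq_sqrt (le_of_lt hqx)
      have hu : bilinR Mq (t⁻¹ • x) (t⁻¹ • x) = 1 := by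
        rw [hqsmul, inv_pow, ht2]
        field_simp
      have h1 : Δ (t⁻¹ • x) ≤ M := hx₀max _ hu
      have h2 : Δ (t⁻¹ • x) = ((t⁻¹)^2)^N * Δ x := hΔsmul t⁻¹ x
      rw [h2] at h1
      have h3 : Δ x = (t^2)^N * (((t⁻¹)^2)^N * Δ x) := by
        rw [← mul_assoc, ← mul_pow, ← mul_pow]
        field_simp
        simp
      rw [h3, ht2]
      calc (bilinR Mq x x) ^ N * (((t⁻¹)^2)^N * Δ x)
          ≤ (bilinR Mq x x) ^ N * M := by
            apply mul_le_mul_of_nonneg_left h1; positivity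
        _ = M * (bilinR Mq x x) ^ N := mul_comm _ _
  have hκpos : 0 < κ := by
    rw [hκ]
    exact Finset.prod_pos fun i _ => by have := hqpos (v i) (hv i); positivity
  have hRHSpos : ∀ s : ℝ, 0 ≤ s → 0 < Real.pi ^ ((n : ℝ) / 2) * κ ^ s *
      (∏ i, Real.Gamma (d i * s + 1) / Real.Gamma (s + 1)) * Mq.det ^ (-(1 : ℝ) / 2) := by
    intro s hs
    have h1 : (0:ℝ) < Real.pi ^ ((n : ℝ) / 2) := Real.rpow_pos_of_pos Real.pi_pos _
    have h2 : (0:ℝ) < κ ^ s := Real.rpow_pos_of_pos hκpos _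
    have h3 : (0:ℝ) < ∏ i, Real.Gamma (d i * s + 1) / Real.Gamma (s + 1) := by
      refine Finset.prod_pos fun i _ => div_pos ?_ ?_
      · apply Real.Gamma_pos_of_pos
        have : (0:ℝ) ≤ (d i : ℝ) * s := mul_nonneg (Nat.cast_nonneg _) hs
        linarith
      · apply Real.Gamma_pos_of_pos; linarith
    have h4 : (0:ℝ) < Mq.det ^ (-(1 : ℝ) / 2) := Real.rpow_pos_of_pos hpos.det_pos _
    positivity
  set F : ℕ → ℝ := fun k => ∫ x : Fin n → ℝ, Δ x ^ ((k : ℕ) : ℝ) * Real.exp (-(bilinR Mq x x)) with hF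
  have hFpos : ∀ k : ℕ, 0 < F k := fun k => by
    rw [hF]; simp only []; rw [hMac _ (by positivity)]; exact hRHSpos _ (by positivity)
  have hInt : ∀ k : ℕ, Integrable
      (fun x : Fin n → ℝ => Δ x ^ ((k : ℕ) : ℝ) * Real.exp (-(bilinR Mq x x))) := by
    intro k
    by_contra hni
    have := integral_undef hni
    rw [show (∫ x : Fin n → ℝ, Δ x ^ ((k : ℕ) : ℝ) * Real.exp (-(bilinR Mq x x))) = F k from rfl] at this
    exact absurd this (ne_of_gt (hFpos k))
  have hMpos : 0 < M := by
    rcases (hΔ0 x₀).lt_or_eq with h | h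
    · exact h
    · exfalso
      have hzero : ∀ x, Δ x = 0 := by
        intro x
        refine le_antisymm ?_ (hΔ0 x)
        have hb := hMbound x
        rw [hM, ← h, zero_mul] at hb
        exact hb
      have : F 1 = 0 := by
        rw [hF]
        simp only []
        have : ∀ x : Fin n → ℝ, Δ x ^ ((1:ℕ):ℝ) * Real.exp (-(bilinR Mq x x)) = 0 := by
          intro x
          rw [hzero x]
          rw [Real.zero_rpow (by norm_num)]
          ring
        rw [show (fun x : Fin n → ℝ => Δ x ^ ((1:ℕ):ℝ) * Real.exp (-(bilinR Mq x x)))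
          = fun _ => (0:ℝ) from funext this]
        simp
      exact absurd this (ne_of_gt (hFpos 1))
  set W : ℕ → ℝ := fun k => F k ^ ((k : ℝ)⁻¹) * (Real.exp 1 / ((N : ℝ) * k)) ^ N with hW
  set T : ℝ := κ * (∏ i, (d i : ℝ) ^ (d i : ℕ)) / (N : ℝ) ^ (N : ℕ) with hT
  have hsumN : (∑ i, (d i - 1)) = N := by
    have h1 : (∑ i, ((d i : ℤ) - 1)) = ∑ i, ((d i - 1 : ℕ) : ℤ) := by
      refine Finset.sum_congr rfl fun i _ => ?_
      rw [Nat.cast_sub (hd i)]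
      norm_num
    rw [h1] at hsum
    exact_mod_cast hsum
  have hstirpos : ∀ m : ℕ, 1 ≤ m → 0 < Stirling.stirlingSeq m := by
    intro m hm
    obtain ⟨m', rfl⟩ := Nat.exists_eq_add_of_le hm
    simpa [Nat.add_comm] using Stirling.stirlingSeq'_pos m'
  set Q : ℕ → ℝ := fun k =>
    (∏ i, Stirling.stirlingSeq (d i * k) * Real.sqrt (d i)) / Stirling.stirlingSeq k ^ n
    with hQdef
  have hQpos : ∀ k : ℕ, 1 ≤ k → 0 < Q k := by
    intro k hk
    apply div_pos
    · refine Finset.prod_pos fun i _ => mul_pos (hstirpos _ ?_) ?_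
      · exact Nat.one_le_iff_ne_zero.2 (Nat.mul_ne_zero (by have := hd i; omega) (by omega))
      · have := hd i
        have : (0:ℝ) < (d i : ℝ) := by exact_mod_cast Nat.lt_of_lt_of_le Nat.zero_lt_one this
        positivity
    · exact pow_pos (hstirpos k hk) n
  set A : ℝ := Real.pi ^ ((n:ℝ)/2) * Mq.det ^ (-(1:ℝ)/2) with hA
  have hApos : 0 < A := by
    rw [hA]
    exact mul_pos (Real.rpow_pos_of_pos Real.pi_pos _) (Real.rpow_pos_of_pos hpos.det_pos _)
  have hFeq : ∀ k : ℕ, F k = A * (κ ^ k *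
      ∏ i, ((Nat.factorial (d i * k) : ℝ) / (Nat.factorial k : ℝ))) := by
    intro k
    have h := hMac (k : ℝ) (by positivity)
    rw [hF]
    simp only []
    rw [h]
    have hκk : κ ^ ((k:ℕ) : ℝ) = κ ^ k := Real.rpow_natCast κ k
    have hprod : (∏ i, Real.Gamma ((d i : ℝ) * (k:ℝ) + 1) / Real.Gamma ((k:ℝ) + 1))
        = ∏ i, ((Nat.factorial (d i * k) : ℝ) / (Nat.factorial k : ℝ)) := by
      refine Finset.prod_congr rfl fun i _ => ?_
      have h1 : ((d i : ℝ)) * (k : ℝ) = ((d i * k : ℕ) : ℝ) := by push_cast; ring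
      rw [h1, Real.Gamma_nat_eq_factorial, Real.Gamma_nat_eq_factorial]
    rw [hκk, hprod, hA]
    ring
  have hPk : ∀ k : ℕ, 1 ≤ k →
      (∏ i, ((Nat.factorial (d i * k) : ℝ) / (Nat.factorial k : ℝ)))
        = Q k * ((∏ i, (d i : ℝ) ^ (d i : ℕ)) * ((k:ℝ)/Real.exp 1) ^ N) ^ k := by
    intro k hk
    have hkR : (0:ℝ) < (k:ℝ) := by exact_mod_cast hk
    have hke : (0:ℝ) < (k:ℝ)/Real.exp 1 := by positivity
    have hfac : ∀ i : Fin n, ((Nat.factorial (d i * k) : ℝ) / (Nat.factorial k : ℝ))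
        = (Stirling.stirlingSeq (d i * k) * Real.sqrt (d i) / Stirling.stirlingSeq k)
          * (((d i : ℝ) ^ (d i : ℕ)) * ((k:ℝ)/Real.exp 1) ^ (d i - 1)) ^ k := by
      intro i
      have hdik : d i * k ≠ 0 := Nat.mul_ne_zero (by have := hd i; omega) (by omega)
      have hdiR : (0:ℝ) < (d i : ℝ) := by
        have := hd i; exact_mod_cast Nat.lt_of_lt_of_le Nat.zero_lt_one this
      rw [factorial_eq_stirling _ hdik, factorial_eq_stirling k (by omega)]
      have hcast : ((d i * k : ℕ) : ℝ) = (d i : ℝ) * (k:ℝ) := by push_cast; ring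
      rw [hcast]
      have hsqrt : Real.sqrt (2 * ((d i : ℝ) * (k:ℝ)))
          = Real.sqrt (d i) * Real.sqrt (2 * (k:ℝ)) := by
        rw [show (2:ℝ) * ((d i : ℝ) * (k:ℝ)) = (d i : ℝ) * (2 * (k:ℝ)) by ring]
        exact Real.sqrt_mul (le_of_lt hdiR) _
      rw [hsqrt]
      have hpow1 : ((d i : ℝ) * (k:ℝ) / Real.exp 1) ^ (d i * k)
          = ((d i : ℝ))^(d i * k) * ((k:ℝ)/Real.exp 1)^(d i * k) := by
        rw [show (d i : ℝ) * (k:ℝ) / Real.exp 1 = (d i : ℝ) * ((k:ℝ)/Real.exp 1) by ring,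
          mul_pow]
      rw [hpow1]
      have hexp : d i * k = k + (d i - 1) * k := by
        have := hd i
        obtain ⟨m, hm⟩ := Nat.exists_eq_add_of_le this
        rw [hm, Nat.add_mul, one_mul, Nat.add_sub_cancel_left]
      have hpow2 : ((k:ℝ)/Real.exp 1)^(d i * k)
          = ((k:ℝ)/Real.exp 1)^k * (((k:ℝ)/Real.exp 1)^(d i - 1))^k := by
        rw [hexp, pow_add, ← pow_mul]
      have hpow3 : ((d i : ℝ))^(d i * k) = (((d i : ℝ))^(d i : ℕ))^k := pow_mul _ _ _
      rw [hpow2, hpow3]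
      have hs2k : Real.sqrt (2 * (k:ℝ)) ≠ 0 := by positivity
      have hsk : Stirling.stirlingSeq k ≠ 0 := ne_of_gt (hstirpos k hk)
      have hkek : ((k:ℝ)/Real.exp 1)^k ≠ 0 := by positivity
      rw [mul_pow]
      field_simp
    rw [Finset.prod_congr rfl (fun i _ => hfac i), Finset.prod_mul_distrib]
    have hq1 : (∏ i, (Stirling.stirlingSeq (d i * k) * Real.sqrt (d i) / Stirling.stirlingSeq k))
        = Q k := by
      rw [hQdef]
      simp only []
      rw [Finset.prod_div_distrib, Finset.prod_const]
      congr 1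
      simp [Finset.card_univ]
    have hq2 : (∏ i, (((d i : ℝ) ^ (d i : ℕ)) * ((k:ℝ)/Real.exp 1) ^ (d i - 1)) ^ k)
        = ((∏ i, (d i : ℝ) ^ (d i : ℕ)) * ((k:ℝ)/Real.exp 1) ^ N) ^ k := by
      rw [Finset.prod_pow]
      congr 1
      rw [Finset.prod_mul_distrib]
      congr 1
      rw [Finset.prod_pow_eq_pow_sum, hsumN]
    rw [hq1, hq2]
  have hWeq : ∀ k : ℕ, 1 ≤ k → W k = (A * Q k) ^ ((k:ℝ)⁻¹) * T := by
    intro k hk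
    have hkR : (0:ℝ) < (k:ℝ) := by exact_mod_cast hk
    have hQk := hQpos k hk
    have hbase : (0:ℝ) ≤ κ * ((∏ i, (d i : ℝ) ^ (d i : ℕ)) * ((k:ℝ)/Real.exp 1) ^ N) := by
      have : (0:ℝ) ≤ ∏ i, (d i : ℝ) ^ (d i : ℕ) := Finset.prod_nonneg fun i _ => by positivity
      positivity
    have hFk : F k = (A * Q k) * (κ * ((∏ i, (d i : ℝ) ^ (d i : ℕ)) * ((k:ℝ)/Real.exp 1) ^ N)) ^ k := by
      rw [hFeq k, hPk k hk, mul_pow]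
      ring
    rw [hW]
    simp only []
    rw [hFk]
    rw [Real.mul_rpow (by positivity) (pow_nonneg hbase k),
      Real.pow_rpow_inv_natCast hbase (by omega)]
    rw [hT]
    have hNR : (0:ℝ) < (N:ℝ) := by exact_mod_cast hN
    have hprodpos : (0:ℝ) ≤ ∏ i, (d i : ℝ) ^ (d i : ℕ) := Finset.prod_nonneg fun i _ => by positivity
    rw [mul_assoc]
    congr 1
    rw [div_pow, div_pow, mul_pow]
    field_simp
  have hQlim : Tendsto Q atTop (𝓝 (∏ i, Real.sqrt (d i))) := by
    have hnum : Tendsto (fun k => ∏ i, Stirling.stirlingSeq (d i * k) * Real.sqrt (d i))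
        atTop (𝓝 (∏ i : Fin n, Real.sqrt Real.pi * Real.sqrt (d i))) := by
      refine tendsto_finset_prod _ fun i _ => ?_
      have hcomp : Tendsto (fun k : ℕ => d i * k) atTop atTop := by
        apply tendsto_atTop_mono (fun k => Nat.le_mul_of_pos_left k (hd i))
        exact tendsto_id
      exact (Stirling.tendsto_stirlingSeq_sqrt_pi.comp hcomp).mul_const _
    have hden : Tendsto (fun k => Stirling.stirlingSeq k ^ n) atTop
        (𝓝 (Real.sqrt Real.pi ^ n)) := Stirling.tendsto_stirlingSeq_sqrt_pi.pow n
    have hne : Real.sqrt Real.pi ^ n ≠ 0 := by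
      have := Real.sqrt_pos.2 Real.pi_pos
      positivity
    have := hnum.div hden hne
    rw [hQdef]
    convert this using 2
    · rfl
    rw [Finset.prod_mul_distrib, Finset.prod_const]
    rw [Finset.card_univ, Fintype.card_fin]
    field_simp
  have hTlim : Tendsto W atTop (𝓝 T) := by
    have hlim0 : (0:ℝ) < A * ∏ i, Real.sqrt (d i) := by
      apply mul_pos hApos
      refine Finset.prod_pos fun i _ => Real.sqrt_pos.2 ?_
      have := hd i
      exact_mod_cast Nat.lt_of_lt_of_le Nat.zero_lt_one this
    have hroot : Tendsto (fun k => (A * Q k) ^ ((k:ℝ)⁻¹)) atTop (𝓝 1) :=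
      tendsto_rpow_inv_of_pos hlim0 (tendsto_const_nhds.mul hQlim)
    have h1 : Tendsto (fun k => (A * Q k) ^ ((k:ℝ)⁻¹) * T) atTop (𝓝 T) := by
      have := hroot.mul_const T
      simpa using this
    refine Tendsto.congr' ?_ h1
    filter_upwards [eventually_ge_atTop 1] with k hk
    exact (hWeq k hk).symm
  have hMleT : M ≤ T := by
    by_contra hlt
    push_neg at hlt
    have hφ : Tendsto (fun ε : ℝ => (M-ε) * Real.exp (-((N:ℝ)*ε))) (𝓝 0) (𝓝 M) := by
      have hc : ContinuousAt (fun ε : ℝ => (M-ε) * Real.exp (-((N:ℝ)*ε))) 0 := by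
        apply ContinuousAt.mul
        · exact (continuous_const.sub continuous_id).continuousAt
        · exact (Real.continuous_exp.comp (continuous_const.mul continuous_id).neg).continuousAt
      have h0 : (M - 0) * Real.exp (-((N:ℝ)*0)) = M := by norm_num
      have ht := hc.tendsto
      rw [h0] at ht
      exact ht
    have hev : ∀ᶠ ε : ℝ in 𝓝[>] (0:ℝ),
        (T < (M-ε) * Real.exp (-((N:ℝ)*ε)) ∧ 0 < ε) ∧ ε < M := by
      have e1 : ∀ᶠ ε : ℝ in 𝓝[>] (0:ℝ), T < (M-ε) * Real.exp (-((N:ℝ)*ε)) :=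
        eventually_nhdsWithin_of_eventually_nhds (hφ.eventually_const_lt hlt)
      have e2 : ∀ᶠ ε : ℝ in 𝓝[>] (0:ℝ), 0 < ε := eventually_mem_nhdsWithin
      have e3 : ∀ᶠ ε : ℝ in 𝓝[>] (0:ℝ), ε < M :=
        eventually_nhdsWithin_of_eventually_nhds
          ((tendsto_id (x := 𝓝 (0:ℝ))).eventually_lt_const hMpos)
      filter_upwards [e1, e2, e3] with ε a b c
      exact ⟨⟨a, b⟩, c⟩
    obtain ⟨ε, ⟨hεT, hε0⟩, hεM⟩ := hev.exists
    have hU : IsOpen {x : Fin n → ℝ | M - ε < Δ x ∧ bilinR Mq x x < 1 + ε} :=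
      (isOpen_lt continuous_const hΔcont).inter
        (isOpen_lt (continuous_bilinR2 Mq) continuous_const)
    have hx₀U : x₀ ∈ {x : Fin n → ℝ | M - ε < Δ x ∧ bilinR Mq x x < 1 + ε} := by
      constructor
      · rw [← hM]; linarith
      · rw [hx₀S]; linarith
    obtain ⟨ρ, hρ0, hρsub⟩ := Metric.isOpen_iff.1 hU x₀ hx₀U
    set c : ℝ := (volume (Metric.ball (0 : Fin n → ℝ) ρ)).toReal with hcdef
    have hcpos : 0 < c := by
      rw [hcdef]
      exact ENNReal.toReal_pos (ne_of_gt (Metric.measure_ball_pos volume _ hρ0))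
        (ne_of_lt measure_ball_lt_top)
    have hWb : ∀ k : ℕ, 1 ≤ k → c ^ ((k:ℝ)⁻¹) * ((M-ε) * Real.exp (-((N:ℝ)*ε))) ≤ W k := by
      intro k hk
      have hkR : (0:ℝ) < (k:ℝ) := by exact_mod_cast hk
      have hNR : (0:ℝ) < (N:ℝ) := by exact_mod_cast hN
      have hNk1 : (1:ℝ) ≤ (N:ℝ) * (k:ℝ) := by
        have : (1:ℝ) * 1 ≤ (N:ℝ) * (k:ℝ) := by
          apply mul_le_mul (by exact_mod_cast hN) (by exact_mod_cast hk) (by norm_num) (by positivity)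
        simpa using this
      set r : ℝ := Real.sqrt ((N:ℝ) * k) with hrdef
      have hr2 : r ^ 2 = (N:ℝ) * k := Real.sq_sqrt (by positivity)
      have hr1 : 1 ≤ r := by
        have := Real.sqrt_le_sqrt hNk1
        rwa [Real.sqrt_one] at this
      have hrpos : (0:ℝ) < r := by linarith
      have hrne : r ≠ 0 := ne_of_gt hrpos
      set a : ℝ := ((N:ℝ)*k) ^ N * (M-ε) * Real.exp (-((N:ℝ)*(1+ε))) with hadef
      have hanneg : 0 ≤ a := by
        rw [hadef]
        have h1 : (0:ℝ) ≤ M - ε := by linarith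
        positivity
      set B := Metric.ball (r • x₀) ρ with hBdef
      have hpt : ∀ y ∈ B, a ^ k ≤ Δ y ^ ((k:ℕ):ℝ) * Real.exp (-(bilinR Mq y y)) := by
        intro y hy
        set x := r⁻¹ • y with hxdef
        have hyx : y = r • x := by rw [hxdef, smul_inv_smul₀ hrne]
        have hxmem : x ∈ Metric.ball x₀ ρ := by
          rw [Metric.mem_ball]
          have h1 : x₀ = r⁻¹ • (r • x₀) := by rw [inv_smul_smul₀ hrne]
          rw [hxdef, h1, dist_smul₀]
          rw [Metric.mem_ball] at hy
          have h2 : ‖r⁻¹‖ = r⁻¹ := by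
            rw [Real.norm_eq_abs, abs_of_pos (by positivity)]
          rw [h2]
          calc r⁻¹ * dist y (r • x₀) < r⁻¹ * ρ := by
                apply mul_lt_mul_of_pos_left hy (by positivity)
            _ ≤ 1 * ρ := by
                apply mul_le_mul_of_nonneg_right _ (le_of_lt hρ0)
                rw [inv_le_one_iff₀]
                right; exact hr1
            _ = ρ := one_mul ρ
        obtain ⟨hxΔ, hxq⟩ := hρsub hxmem
        have hΔy : ((N:ℝ)*k) ^ N * (M-ε) ≤ Δ y := by
          rw [hyx, hΔsmul, hr2]
          apply mul_le_mul_of_nonneg_left (le_of_lt hxΔ)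
          positivity
        have hqy : bilinR Mq y y ≤ ((N:ℝ)*k) * (1+ε) := by
          rw [hyx, hqsmul, hr2]
          apply mul_le_mul_of_nonneg_left (le_of_lt hxq) (by positivity)
        have hexpy : Real.exp (-(((N:ℝ)*k) * (1+ε))) ≤ Real.exp (-(bilinR Mq y y)) :=
          Real.exp_le_exp.2 (by linarith)
        have hΔyk : (((N:ℝ)*k) ^ N * (M-ε)) ^ k ≤ Δ y ^ ((k:ℕ):ℝ) := by
          rw [Real.rpow_natCast]
          apply pow_le_pow_left₀ _ hΔy
          have h1 : (0:ℝ) ≤ M - ε := by linarith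
          positivity
        have hm : a ^ k = (((N:ℝ)*k) ^ N * (M-ε)) ^ k * Real.exp (-(((N:ℝ)*k) * (1+ε))) := by
          rw [hadef, mul_pow]
          congr 1
          rw [← Real.exp_nat_mul]
          congr 1
          ring
        rw [hm]
        refine mul_le_mul hΔyk hexpy (le_of_lt (Real.exp_pos _)) ?_
        rw [Real.rpow_natCast]
        exact pow_nonneg (hΔ0 y) k
      have hBmeas : MeasurableSet B := measurableSet_ball
      have hFb : c * a ^ k ≤ F k := by
        have hint_ind : Integrable (B.indicator (fun _ => a ^ k)) := by
          rw [integrable_indicator_iff hBmeas]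
          exact integrableOn_const measure_ball_lt_top.ne
        have hle : ∀ x : Fin n → ℝ, B.indicator (fun _ => a ^ k) x
            ≤ Δ x ^ ((k:ℕ):ℝ) * Real.exp (-(bilinR Mq x x)) := by
          intro x
          by_cases hx : x ∈ B
          · rw [Set.indicator_of_mem hx]
            exact hpt x hx
          · rw [Set.indicator_of_notMem hx]
            have := hΔ0 x
            positivity
        have h1 := integral_mono hint_ind (hInt k) hle
        rw [integral_indicator_const _ hBmeas] at h1
        rw [hBdef, measureReal_def, Measure.addHaar_ball_center] at h1
        rw [hF]
        simp only []
        calc c * a ^ k = (volume (Metric.ball (0 : Fin n → ℝ) ρ)).toReal • a ^ k := by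
              rw [hcdef, smul_eq_mul]
          _ ≤ _ := h1
      have hroot : c ^ ((k:ℝ)⁻¹) * a ≤ F k ^ ((k:ℝ)⁻¹) := by
        have h1 : (c * a ^ k) ^ ((k:ℝ)⁻¹) ≤ F k ^ ((k:ℝ)⁻¹) :=
          Real.rpow_le_rpow (by positivity) hFb (by positivity)
        rwa [Real.mul_rpow (le_of_lt hcpos) (pow_nonneg hanneg k),
          Real.pow_rpow_inv_natCast hanneg (by omega)] at h1
      have hWk : c ^ ((k:ℝ)⁻¹) * a * (Real.exp 1 / ((N:ℝ) * k)) ^ N ≤ W k := by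
        rw [hW]
        simp only []
        apply mul_le_mul_of_nonneg_right hroot
        positivity
      have hfinal : c ^ ((k:ℝ)⁻¹) * a * (Real.exp 1 / ((N:ℝ) * k)) ^ N
          = c ^ ((k:ℝ)⁻¹) * ((M-ε) * Real.exp (-((N:ℝ)*ε))) := by
        rw [hadef]
        have hNke : (0:ℝ) < (N:ℝ) * k := by positivity
        have h1 : ((N:ℝ)*k) ^ N * (Real.exp 1 / ((N:ℝ) * k)) ^ N = Real.exp 1 ^ N := by
          rw [← mul_pow]
          congr 1
          field_simp
        have h2 : Real.exp (-((N:ℝ)*(1+ε))) * Real.exp 1 ^ N = Real.exp (-((N:ℝ)*ε)) := by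
          rw [← Real.exp_nat_mul, ← Real.exp_add]
          congr 1
          ring
        calc c ^ ((k:ℝ)⁻¹) * (((N:ℝ)*k) ^ N * (M-ε) * Real.exp (-((N:ℝ)*(1+ε))))
              * (Real.exp 1 / ((N:ℝ) * k)) ^ N
            = c ^ ((k:ℝ)⁻¹) * ((M-ε) * ((((N:ℝ)*k) ^ N * (Real.exp 1 / ((N:ℝ) * k)) ^ N))
              * Real.exp (-((N:ℝ)*(1+ε)))) := by ring
          _ = c ^ ((k:ℝ)⁻¹) * ((M-ε) * Real.exp 1 ^ N * Real.exp (-((N:ℝ)*(1+ε)))) := by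
              rw [h1]
          _ = c ^ ((k:ℝ)⁻¹) * ((M-ε) * Real.exp (-((N:ℝ)*ε))) := by
              rw [mul_assoc (M-ε), mul_comm (Real.exp 1 ^ N), h2]
      rw [← hfinal]
      exact hWk
    have hlim2 : Tendsto (fun k : ℕ => c ^ ((k:ℝ)⁻¹) * ((M-ε) * Real.exp (-((N:ℝ)*ε))))
        atTop (𝓝 ((M-ε) * Real.exp (-((N:ℝ)*ε)))) := by
      have := (tendsto_const_rpow_inv c hcpos).mul_const ((M-ε) * Real.exp (-((N:ℝ)*ε)))
      simpa using this
    have : (M-ε) * Real.exp (-((N:ℝ)*ε)) ≤ T := by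
      refine le_of_tendsto_of_tendsto hlim2 hTlim ?_
      filter_upwards [eventually_ge_atTop 1] with k hk
      exact hWb k hk
    linarith
  have hint0 : Integrable (fun x : Fin n → ℝ => Real.exp (-(bilinR Mq x x))) := by
    have h := hInt 0
    have heq : (fun x : Fin n → ℝ => Δ x ^ ((0:ℕ):ℝ) * Real.exp (-(bilinR Mq x x)))
        = fun x : Fin n → ℝ => Real.exp (-(bilinR Mq x x)) := by
      funext x; rw [Nat.cast_zero, Real.rpow_zero, one_mul]
    rwa [heq] at h
  have hTleM : T ≤ M := by
    by_contra hlt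
    push_neg at hlt
    have hψ : Tendsto (fun δ : ℝ => M / (1-δ)^N) (𝓝 0) (𝓝 M) := by
      have hc : ContinuousAt (fun δ : ℝ => M / (1-δ)^N) 0 := by
        apply ContinuousAt.div continuousAt_const
          ((continuous_const.sub continuous_id).pow N).continuousAt
        norm_num
      have h0 : M / ((1:ℝ)-0)^N = M := by norm_num
      have ht := hc.tendsto
      rw [h0] at ht
      exact ht
    have hev : ∀ᶠ δ : ℝ in 𝓝[>] (0:ℝ), M / (1-δ)^N < T ∧ 0 < δ ∧ δ < 1 := by
      have e1 : ∀ᶠ δ : ℝ in 𝓝[>] (0:ℝ), M / (1-δ)^N < T :=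
        eventually_nhdsWithin_of_eventually_nhds (hψ.eventually_lt_const hlt)
      have e2 : ∀ᶠ δ : ℝ in 𝓝[>] (0:ℝ), 0 < δ := eventually_mem_nhdsWithin
      have e3 : ∀ᶠ δ : ℝ in 𝓝[>] (0:ℝ), δ < 1 :=
        eventually_nhdsWithin_of_eventually_nhds (Filter.Tendsto.eventually_lt_const (by norm_num) tendsto_id)
      filter_upwards [e1, e2, e3] with δ a b c
      exact ⟨a, b, c⟩
    obtain ⟨δ, hδT, hδ0, hδ1⟩ := hev.exists
    have h1δ : (0:ℝ) < 1 - δ := by linarith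
    have hintδ : Integrable (fun x : Fin n → ℝ => Real.exp (-(δ * bilinR Mq x x))) := by
      have hs : Real.sqrt δ ≠ 0 := by positivity
      have h2 : (fun x : Fin n → ℝ =>
          Real.exp (-(bilinR Mq ((Real.sqrt δ) • x) ((Real.sqrt δ) • x))))
          = fun x : Fin n → ℝ => Real.exp (-(δ * bilinR Mq x x)) := by
        funext x; rw [hqsmul, Real.sq_sqrt (le_of_lt hδ0)]
      rw [← h2]
      exact hint0.comp_smul hs
    set Cδ : ℝ := ∫ x : Fin n → ℝ, Real.exp (-(δ * bilinR Mq x x)) with hCδ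
    have hCδpos : 0 < Cδ := by
      rw [hCδ, integral_pos_iff_support_of_nonneg (fun x => le_of_lt (Real.exp_pos _)) hintδ]
      have : Function.support (fun x : Fin n → ℝ => Real.exp (-(δ * bilinR Mq x x))) = Set.univ := by
        ext x; simp [Function.mem_support, ne_of_gt (Real.exp_pos _)]
      rw [this]
      exact isOpen_univ.measure_pos volume ⟨0, trivial⟩
    have hWb : ∀ k : ℕ, 1 ≤ k → W k ≤ (M / (1-δ)^N) * Cδ ^ ((k:ℝ)⁻¹) := by
      intro k hk
      have hkR : (0:ℝ) < (k:ℝ) := by exact_mod_cast hk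
      have hNk0 : N * k ≠ 0 := Nat.mul_ne_zero (by omega) (by omega)
      set a : ℝ := M * (((N*k : ℕ):ℝ) / ((1-δ) * Real.exp 1)) ^ N with ha
      have hanneg : 0 ≤ a := by
        rw [ha]; positivity
      have hFb : F k ≤ a ^ k * Cδ := by
        rw [hF, hCδ]
        simp only []
        rw [← MeasureTheory.integral_const_mul]
        refine integral_mono (hInt k) (hintδ.const_mul _) fun x => ?_
        simp only []
        have hqx := hq_nonneg x
        have e1 : Δ x ^ ((k:ℕ):ℝ) = Δ x ^ k := Real.rpow_natCast _ k
        rw [e1]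
        have e2 : Δ x ^ k ≤ (M * bilinR Mq x x ^ N) ^ k :=
          pow_le_pow_left₀ (hΔ0 x) (hMbound x) k
        have e3 : Real.exp (-(bilinR Mq x x))
            = Real.exp (-((1-δ) * bilinR Mq x x)) * Real.exp (-(δ * bilinR Mq x x)) := by
          rw [← Real.exp_add]; congr 1; ring
        have e4 : (bilinR Mq x x ^ N) ^ k * Real.exp (-((1-δ) * bilinR Mq x x))
            ≤ (((N*k : ℕ):ℝ) / ((1-δ) * Real.exp 1)) ^ (N*k) := by
          rw [← pow_mul]
          exact pow_mul_exp_le _ _ _ hqx h1δ hNk0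
        calc Δ x ^ k * Real.exp (-(bilinR Mq x x))
            ≤ (M * bilinR Mq x x ^ N) ^ k * Real.exp (-(bilinR Mq x x)) := by
              apply mul_le_mul_of_nonneg_right e2 (le_of_lt (Real.exp_pos _))
          _ = M ^ k * ((bilinR Mq x x ^ N) ^ k * Real.exp (-((1-δ) * bilinR Mq x x)))
              * Real.exp (-(δ * bilinR Mq x x)) := by rw [e3, mul_pow]; ring
          _ ≤ M ^ k * ((((N*k : ℕ):ℝ) / ((1-δ) * Real.exp 1)) ^ (N*k))
              * Real.exp (-(δ * bilinR Mq x x)) := by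
              apply mul_le_mul_of_nonneg_right _ (le_of_lt (Real.exp_pos _))
              apply mul_le_mul_of_nonneg_left e4 (pow_nonneg (le_of_lt hMpos) k)
          _ = a ^ k * Real.exp (-(δ * bilinR Mq x x)) := by
              rw [ha, mul_pow, ← pow_mul, mul_comm N k]
      have hroot : F k ^ ((k:ℝ)⁻¹) ≤ a * Cδ ^ ((k:ℝ)⁻¹) := by
        have h1 : F k ^ ((k:ℝ)⁻¹) ≤ (a ^ k * Cδ) ^ ((k:ℝ)⁻¹) :=
          Real.rpow_le_rpow (le_of_lt (hFpos k)) hFb (by positivity)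
        rwa [Real.mul_rpow (pow_nonneg hanneg k) (le_of_lt hCδpos),
          Real.pow_rpow_inv_natCast hanneg (by omega)] at h1
      have hWk : W k ≤ a * Cδ ^ ((k:ℝ)⁻¹) * (Real.exp 1 / ((N:ℝ) * k)) ^ N := by
        rw [hW]
        simp only []
        apply mul_le_mul_of_nonneg_right hroot
        positivity
      have hfinal : a * Cδ ^ ((k:ℝ)⁻¹) * (Real.exp 1 / ((N:ℝ) * k)) ^ N
          = (M / (1-δ)^N) * Cδ ^ ((k:ℝ)⁻¹) := by
        have hNR : (0:ℝ) < (N:ℝ) := by exact_mod_cast hN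
        have hcast : ((N*k : ℕ):ℝ) = (N:ℝ) * (k:ℝ) := by push_cast; ring
        have he : (0:ℝ) < Real.exp 1 := Real.exp_pos 1
        have hx2 : (((N:ℝ)*(k:ℝ))/((1-δ)*Real.exp 1))^N * (Real.exp 1/((N:ℝ)*(k:ℝ)))^N
            = ((1-δ)⁻¹)^N := by
          rw [← mul_pow]
          congr 1
          field_simp
        rw [ha, hcast]
        calc M * (((N:ℝ)*(k:ℝ))/((1-δ)*Real.exp 1))^N * Cδ ^ ((k:ℝ)⁻¹) * (Real.exp 1/((N:ℝ)*(k:ℝ)))^N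
            = M * ((((N:ℝ)*(k:ℝ))/((1-δ)*Real.exp 1))^N * (Real.exp 1/((N:ℝ)*(k:ℝ)))^N) * Cδ ^ ((k:ℝ)⁻¹) := by
              ring
          _ = M * ((1-δ)⁻¹)^N * Cδ ^ ((k:ℝ)⁻¹) := by rw [hx2]
          _ = (M / (1-δ)^N) * Cδ ^ ((k:ℝ)⁻¹) := by rw [div_eq_mul_inv, inv_pow]
      rw [hfinal] at hWk
      exact hWk
    have hlim2 : Tendsto (fun k : ℕ => (M / (1-δ)^N) * Cδ ^ ((k:ℝ)⁻¹)) atTop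
        (𝓝 (M / (1-δ)^N)) := by
      have := (tendsto_const_rpow_inv Cδ hCδpos).const_mul (M / (1-δ)^N)
      simpa using this
    have : T ≤ M / (1-δ)^N := by
      refine le_of_tendsto_of_tendsto hTlim hlim2 ?_
      filter_upwards [eventually_ge_atTop 1] with k hk
      exact hWb k hk
    linarith
  have hMT : M = T := le_antisymm hMleT hTleM
  constructor
  · exact ⟨x₀, hx₀S, by rw [← hMT]⟩
  · rintro y ⟨x, hx, rfl⟩
    rw [← hMT]
    exact hx₀max x hx
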